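/- A value Φ on TU games satisfies efficiency, the k-nullifying null player property, and fairness if and only if Φ = Φ^{k-SED}. -/

import Mathlib

open Finset

/-- The Shapley value of player `i` in the TU game `v` on player set `Fin n`. -/
noncomputable def shapley (n : ℕ) (v : Finset (Fin n) → ℝ) (i : Fin n) : ℝ :=
  ∑ S ∈ (Finset.univ.erase i).powerset,
      ((S.card.factorial * (n - S.card - 1).factorial : ℝ) / n.factorial) *
        (v (insert i S) - v S)

/-- The `k`-SED value of player `i` in the TU game `v` on player set `Fin n`. -/
noncomputable def kSED (n k : ℕ) (v : Finset (Fin n) → ℝ) (i : Fin n) : ℝ :=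
  (∑ S ∈ ((Finset.univ.erase i).powerset.filter (fun S => S.card = k - 1)),
      (((n - k).factorial * (k - 1).factorial : ℝ) / n.factorial) * v (insert i S))
  + ∑ S ∈ ((Finset.univ.erase i).powerset.filter (fun S => k ≤ S.card)),
      (((n - S.card - 1).factorial * S.card.factorial : ℝ) / n.factorial) *
        (v (insert i S) - v S)

theorem shapley_add (n : ℕ) (v w : Finset (Fin n) → ℝ) (i : Fin n) :
    shapley n (v + w) i = shapley n v i + shapley n w i := by
  unfold shapley
  rw [← Finset.sum_add_distrib]
  refine Finset.sum_congr rfl fun S _ => ?_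
  simp [Pi.add_apply]
  ring

theorem shapley_null (n : ℕ) (v : Finset (Fin n) → ℝ) (i : Fin n)
    (h : ∀ S ∈ (Finset.univ.erase i).powerset, v (insert i S) = v S) :
    shapley n v i = 0 := by
  unfold shapley
  refine Finset.sum_eq_zero fun S hS => ?_
  rw [h S hS]; ring



theorem shapley_symm (n : ℕ) (w : Finset (Fin n) → ℝ) (i j : Fin n) (hij : i ≠ j)
    (hsym : ∀ S ∈ (Finset.univ \ {i, j} : Finset (Fin n)).powerset,
      w (insert i S) = w (insert j S)) :
    shapley n w i = shapley n w j := by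
  have hsym' : ∀ S : Finset (Fin n), i ∉ S → j ∉ S → w (insert i S) = w (insert j S) := by
    intro S hi hj
    refine hsym S ?_
    simp only [Finset.mem_powerset]
    intro x hx
    simp only [Finset.mem_sdiff, Finset.mem_univ, true_and, Finset.mem_insert,
      Finset.mem_singleton]
    push_neg
    exact ⟨fun h => hi (h ▸ hx), fun h => hj (h ▸ hx)⟩
  have key : ∀ S : Finset (Fin n), i ∉ S → j ∈ S → w (insert i (S.erase j)) = w S := by
    intro S hi hj
    rw [hsym' (S.erase j) (fun h => hi (Finset.mem_of_mem_erase h)) (Finset.notMem_erase j S),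
      Finset.insert_erase hj]
  unfold shapley
  refine Finset.sum_nbij' (i := fun S => if j ∈ S then insert i (S.erase j) else S)
    (j := fun T => if i ∈ T then insert j (T.erase i) else T) ?_ ?_ ?_ ?_ ?_
  · intro S hS
    simp only [Finset.mem_powerset, Finset.subset_erase] at hS ⊢
    refine ⟨Finset.subset_univ _, ?_⟩
    by_cases hj : j ∈ S
    · simp only [hj, if_true, Finset.mem_insert]
      push_neg
      exact ⟨fun h => hij h.symm, Finset.notMem_erase j S⟩
    · simp only [hj, if_false]; exact not_false
  · intro T hT
    simp only [Finset.mem_powerset, Finset.subset_erase] at hT ⊢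
    refine ⟨Finset.subset_univ _, ?_⟩
    by_cases hi : i ∈ T
    · simp only [hi, if_true, Finset.mem_insert]
      push_neg
      exact ⟨hij, Finset.notMem_erase i T⟩
    · simp only [hi, if_false]; exact not_false
  · intro S hS
    simp only [Finset.mem_powerset, Finset.subset_erase] at hS
    obtain ⟨-, hiS⟩ := hS
    by_cases hj : j ∈ S
    · have hiB : i ∉ S.erase j := fun h => hiS (Finset.mem_of_mem_erase h)
      simp only [hj, if_true, if_pos (Finset.mem_insert_self i _)]
      rw [Finset.erase_insert hiB, Finset.insert_erase hj]
    · simp [hj, hiS]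
  · intro T hT
    simp only [Finset.mem_powerset, Finset.subset_erase] at hT
    obtain ⟨-, hjT⟩ := hT
    by_cases hi : i ∈ T
    · have hjB : j ∉ T.erase i := fun h => hjT (Finset.mem_of_mem_erase h)
      simp only [hi, if_true, if_pos (Finset.mem_insert_self j _)]
      rw [Finset.erase_insert hjB, Finset.insert_erase hi]
    · simp [hi, hjT]
  · intro S hS
    simp only [Finset.mem_powerset, Finset.subset_erase] at hS
    obtain ⟨-, hiS⟩ := hS
    by_cases hj : j ∈ S
    · have hiB : i ∉ S.erase j := fun h => hiS (Finset.mem_of_mem_erase h)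
      simp only [hj, if_true]
      have hcard : (insert i (S.erase j)).card = S.card := by
        rw [Finset.card_insert_of_notMem hiB, Finset.card_erase_of_mem hj]
        have : 0 < S.card := Finset.card_pos.mpr ⟨j, hj⟩
        omega
      rw [hcard, key S hiS hj]
      have hins : insert j (insert i (S.erase j)) = insert i S := by
        rw [Finset.insert_comm, Finset.insert_erase hj]
      rw [hins]
    · simp only [hj, if_false]
      rw [hsym' S hiS hj]


theorem shapley_eff (n : ℕ) (hn : 1 ≤ n) (v : Finset (Fin n) → ℝ) (h0 : v ∅ = 0) :
    ∑ i, shapley n v i = v Finset.univ := by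
  classical
  set F : Finset (Fin n) → ℝ := fun T =>
    (((T.card - 1).factorial * (n - T.card).factorial : ℝ) / n.factorial) * v T with hF
  set G : Finset (Fin n) → ℝ := fun S =>
    ((S.card.factorial * (n - S.card - 1).factorial : ℝ) / n.factorial) * v S with hG
  have hpow : ∀ i : Fin n, (Finset.univ.erase i).powerset
      = Finset.univ.powerset.filter (fun S => i ∉ S) := by
    intro i; ext S
    simp [Finset.subset_erase]
  have step1 : ∀ i : Fin n, shapley n v i =
      (∑ T ∈ Finset.univ.powerset.filter (fun T => i ∈ T), F T)
      - ∑ S ∈ Finset.univ.powerset.filter (fun S => i ∉ S), G S := by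
    intro i
    unfold shapley
    have expand : ∀ S ∈ (Finset.univ.erase i).powerset,
        ((S.card.factorial * (n - S.card - 1).factorial : ℝ) / n.factorial) *
          (v (insert i S) - v S)
        = ((S.card.factorial * (n - S.card - 1).factorial : ℝ) / n.factorial) *
            v (insert i S) - G S := by
      intro S _; rw [hG]; ring
    rw [Finset.sum_congr rfl expand, Finset.sum_sub_distrib, ← hpow i]
    congr 1
    refine Finset.sum_nbij' (i := fun S => insert i S) (j := fun T => T.erase i) ?_ ?_ ?_ ?_ ?_
    · intro S hS
      simp only [Finset.mem_powerset, Finset.subset_erase, Finset.mem_filter] at hS ⊢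
      exact ⟨Finset.subset_univ _, Finset.mem_insert_self i S⟩
    · intro T hT
      simp only [Finset.mem_powerset, Finset.subset_erase, Finset.mem_filter] at hT ⊢
      exact ⟨Finset.subset_univ _, Finset.notMem_erase i T⟩
    · intro S hS
      simp only [Finset.mem_powerset, Finset.subset_erase] at hS
      exact Finset.erase_insert hS.2
    · intro T hT
      simp only [Finset.mem_filter] at hT
      exact Finset.insert_erase hT.2
    · intro S hS
      simp only [Finset.mem_powerset, Finset.subset_erase] at hS
      rw [hF]
      have hc : (insert i S).card = S.card + 1 := Finset.card_insert_of_notMem hS.2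
      simp only [hc]
      have h1 : S.card + 1 - 1 = S.card := by omega
      have h2 : n - (S.card + 1) = n - S.card - 1 := by omega
      rw [h1, h2]
  rw [Finset.sum_congr rfl (fun i _ => step1 i), Finset.sum_sub_distrib]
  have hA : ∑ i : Fin n, ∑ T ∈ Finset.univ.powerset.filter (fun T => i ∈ T), F T
      = ∑ T ∈ Finset.univ.powerset, (T.card : ℝ) * F T := by
    have h1 : ∀ i : Fin n, ∑ T ∈ Finset.univ.powerset.filter (fun T => i ∈ T), F T
        = ∑ T ∈ Finset.univ.powerset, if i ∈ T then F T else 0 :=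
      fun i => Finset.sum_filter _ _
    rw [Finset.sum_congr rfl (fun i _ => h1 i), Finset.sum_comm]
    refine Finset.sum_congr rfl fun T _ => ?_
    rw [Finset.sum_ite_mem, Finset.univ_inter, Finset.sum_const, nsmul_eq_mul]
  have hB : ∑ i : Fin n, ∑ S ∈ Finset.univ.powerset.filter (fun S => i ∉ S), G S
      = ∑ S ∈ Finset.univ.powerset, ((n : ℝ) - S.card) * G S := by
    have h1 : ∀ i : Fin n, ∑ S ∈ Finset.univ.powerset.filter (fun S => i ∉ S), G S
        = ∑ S ∈ Finset.univ.powerset, if i ∉ S then G S else 0 :=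
      fun i => Finset.sum_filter _ _
    rw [Finset.sum_congr rfl (fun i _ => h1 i), Finset.sum_comm]
    refine Finset.sum_congr rfl fun S hS => ?_
    have h2 : ∀ i : Fin n, (if i ∉ S then G S else 0) = if i ∈ Finset.univ \ S then G S else 0 := by
      intro i; simp
    rw [Finset.sum_congr rfl (fun i _ => h2 i), Finset.sum_ite_mem, Finset.univ_inter, Finset.sum_const, nsmul_eq_mul]
    congr 1
    rw [Finset.card_sdiff_of_subset (Finset.subset_univ S), Finset.card_univ, Fintype.card_fin]
    have hle := Finset.card_le_card (Finset.mem_powerset.mp hS)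
    rw [Finset.card_univ, Fintype.card_fin] at hle
    push_cast [Nat.cast_sub hle]
    ring
  rw [hA, hB, ← Finset.sum_sub_distrib]
  have hne : (n.factorial : ℝ) ≠ 0 := Nat.cast_ne_zero.mpr (Nat.factorial_ne_zero n)
  have hnn : (n : ℝ) * (n - 1).factorial = n.factorial := by
    have h := Nat.mul_factorial_pred (Nat.lt_of_lt_of_le Nat.zero_lt_one hn).ne'
    calc (n : ℝ) * (n - 1).factorial = ((n * (n - 1).factorial : ℕ) : ℝ) := by push_cast; ring
      _ = n.factorial := by rw [h]
  rw [Finset.sum_eq_single_of_mem Finset.univ (Finset.mem_powerset_self _)]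
  · simp only [hF, hG, Finset.card_univ, Fintype.card_fin, Nat.sub_self, sub_self,
      zero_mul, sub_zero, Nat.factorial_zero, Nat.cast_one, mul_one]
    field_simp
    rw [← hnn]
  · intro T hT hTne
    by_cases hTe : T = ∅
    · subst hTe
      simp [hF, hG, h0]
    · have hpos : 0 < T.card := Finset.card_pos.mpr (Finset.nonempty_of_ne_empty hTe)
      have hlt : T.card < n := by
        have h := Finset.card_lt_card (lt_of_le_of_ne (Finset.mem_powerset.mp hT) hTne)
        rwa [Finset.card_univ, Fintype.card_fin] at h
      simp only [hF, hG]
      set t := T.card with ht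
      have hfac1 : (t : ℝ) * (t - 1).factorial = t.factorial := by
        have h := Nat.mul_factorial_pred hpos.ne'
        calc (t : ℝ) * (t - 1).factorial = ((t * (t - 1).factorial : ℕ) : ℝ) := by
              push_cast; ring
          _ = t.factorial := by rw [h]
      have hc : ((n - t : ℕ) : ℝ) = (n : ℝ) - t := by
        push_cast [Nat.cast_sub (le_of_lt hlt)]; ring
      have hfac2 : ((n : ℝ) - t) * (n - t - 1).factorial = (n - t).factorial := by
        have hpos2 : 0 < n - t := by omega
        have h := Nat.mul_factorial_pred hpos2.ne'
        calc ((n : ℝ) - t) * (n - t - 1).factorial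
            = ((n - t : ℕ) : ℝ) * (n - t - 1).factorial := by rw [hc]
          _ = (((n - t) * (n - t - 1).factorial : ℕ) : ℝ) := by push_cast; ring
          _ = (n - t).factorial := by rw [h]
      have e1 : (t : ℝ) * ((((t - 1).factorial : ℝ) * ((n - t).factorial : ℝ)) / (n.factorial : ℝ) * v T)
          = (((t.factorial : ℝ) * ((n - t).factorial : ℝ)) / (n.factorial : ℝ)) * v T := by
        rw [← hfac1]; ring
      have e2 : ((n : ℝ) - t) * (((t.factorial : ℝ) * ((n - t - 1).factorial : ℝ)) / (n.factorial : ℝ) * v T)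
          = (((t.factorial : ℝ) * ((n - t).factorial : ℝ)) / (n.factorial : ℝ)) * v T := by
        rw [← hfac2]; ring
      rw [e1, e2, sub_self]

noncomputable def trunc (n k : ℕ) (v : Finset (Fin n) → ℝ) : Finset (Fin n) → ℝ :=
  fun S => if k ≤ S.card then v S else 0

theorem trunc_empty (n k : ℕ) (hk : 1 ≤ k) (v : Finset (Fin n) → ℝ) :
    trunc n k v ∅ = 0 := by
  unfold trunc
  rw [if_neg]
  simp only [Finset.card_empty]
  omega

theorem trunc_univ (n k : ℕ) (hkn : k ≤ n) (v : Finset (Fin n) → ℝ) :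
    trunc n k v Finset.univ = v Finset.univ := by
  unfold trunc
  rw [if_pos]
  rw [Finset.card_univ, Fintype.card_fin]
  exact hkn

theorem trunc_add (n k : ℕ) (v w : Finset (Fin n) → ℝ) :
    trunc n k (v + w) = trunc n k v + trunc n k w := by
  funext S
  unfold trunc
  by_cases h : k ≤ S.card <;> simp [h]

theorem kSED_eq_shapley (n k : ℕ) (hk : 1 ≤ k) (v : Finset (Fin n) → ℝ) (i : Fin n) :
    kSED n k v i = shapley n (trunc n k v) i := by
  classical
  unfold kSED shapley
  rw [← Finset.sum_filter_add_sum_filter_not ((Finset.univ.erase i).powerset)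
    (fun S => k ≤ S.card)]
  have hins : ∀ S : Finset (Fin n), S ∈ (Finset.univ.erase i).powerset →
      (insert i S).card = S.card + 1 := by
    intro S hS
    simp only [Finset.mem_powerset, Finset.subset_erase] at hS
    exact Finset.card_insert_of_notMem hS.2
  have h2 : ∑ S ∈ ((Finset.univ.erase i).powerset.filter (fun S => k ≤ S.card)),
      (((n - S.card - 1).factorial * S.card.factorial : ℝ) / n.factorial) *
        (v (insert i S) - v S)
      = ∑ S ∈ ((Finset.univ.erase i).powerset.filter (fun S => k ≤ S.card)),
        ((S.card.factorial * (n - S.card - 1).factorial : ℝ) / n.factorial) *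
          (trunc n k v (insert i S) - trunc n k v S) := by
    refine Finset.sum_congr rfl fun S hS => ?_
    simp only [Finset.mem_filter] at hS
    obtain ⟨hSp, hSk⟩ := hS
    have e1 : trunc n k v (insert i S) = v (insert i S) := by
      unfold trunc; rw [if_pos]; rw [hins S hSp]; omega
    have e2 : trunc n k v S = v S := by
      unfold trunc; rw [if_pos hSk]
    rw [e1, e2]; ring
  have h1 : ∑ S ∈ ((Finset.univ.erase i).powerset.filter (fun S => S.card = k - 1)),
      (((n - k).factorial * (k - 1).factorial : ℝ) / n.factorial) * v (insert i S)
      = ∑ S ∈ ((Finset.univ.erase i).powerset.filter (fun S => ¬ k ≤ S.card)),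
        ((S.card.factorial * (n - S.card - 1).factorial : ℝ) / n.factorial) *
          (trunc n k v (insert i S) - trunc n k v S) := by
    have hsets : (Finset.univ.erase i).powerset.filter (fun S => S.card = k - 1)
        = ((Finset.univ.erase i).powerset.filter (fun S => ¬ k ≤ S.card)).filter
            (fun S => S.card = k - 1) := by
      ext S
      simp only [Finset.mem_filter, and_assoc]
      constructor
      · rintro ⟨h, hc⟩; exact ⟨h, by omega, hc⟩
      · rintro ⟨h, _, hc⟩; exact ⟨h, hc⟩
    rw [hsets, Finset.sum_filter]
    refine Finset.sum_congr rfl fun S hS => ?_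
    simp only [Finset.mem_filter] at hS
    obtain ⟨hSp, hSk⟩ := hS
    by_cases hc : S.card = k - 1
    · rw [if_pos hc]
      have e1 : trunc n k v (insert i S) = v (insert i S) := by
        unfold trunc; rw [if_pos]; rw [hins S hSp]; omega
      have e2 : trunc n k v S = 0 := by
        unfold trunc; rw [if_neg hSk]
      rw [e1, e2, hc]
      have e3 : n - (k - 1) - 1 = n - k := by omega
      rw [e3]; ring
    · rw [if_neg hc]
      have e1 : trunc n k v (insert i S) = 0 := by
        unfold trunc; rw [if_neg]; rw [hins S hSp]; omega
      have e2 : trunc n k v S = 0 := by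
        unfold trunc; rw [if_neg hSk]
      rw [e1, e2]; ring
  rw [h1, h2, add_comm]

theorem kSED_eff (n k : ℕ) (hn : 1 ≤ n) (hk : 1 ≤ k) (hkn : k ≤ n)
    (v : Finset (Fin n) → ℝ) :
    ∑ i, kSED n k v i = v Finset.univ := by
  rw [Finset.sum_congr rfl (fun i _ => kSED_eq_shapley n k hk v i),
    shapley_eff n hn _ (trunc_empty n k hk v), trunc_univ n k hkn v]

theorem kSED_null (n k : ℕ) (hk : 1 ≤ k) (v : Finset (Fin n) → ℝ) (i : Fin n)
    (h1 : ∀ S ∈ (Finset.univ.erase i).powerset, S.card < k → v (insert i S) = 0)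
    (h2 : ∀ S ∈ (Finset.univ.erase i).powerset, k ≤ S.card → v (insert i S) = v S) :
    kSED n k v i = 0 := by
  unfold kSED
  rw [Finset.sum_eq_zero, Finset.sum_eq_zero, add_zero]
  · intro S hS
    simp only [Finset.mem_filter] at hS
    rw [h2 S hS.1 hS.2]; ring
  · intro S hS
    simp only [Finset.mem_filter] at hS
    rw [h1 S hS.1 (by omega)]; ring

theorem kSED_fair (n k : ℕ) (hk : 1 ≤ k) (v w : Finset (Fin n) → ℝ) (i j : Fin n)
    (hsym : ∀ S ∈ (Finset.univ \ {i, j} : Finset (Fin n)).powerset,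
      w (insert i S) = w (insert j S)) :
    kSED n k (v + w) i - kSED n k v i = kSED n k (v + w) j - kSED n k v j := by
  by_cases hij : i = j
  · subst hij; rfl
  have key : ∀ l : Fin n, kSED n k (v + w) l - kSED n k v l = shapley n (trunc n k w) l := by
    intro l
    rw [kSED_eq_shapley n k hk _ l, kSED_eq_shapley n k hk _ l, trunc_add,
      shapley_add]
    ring
  rw [key i, key j]
  refine shapley_symm n (trunc n k w) i j hij ?_
  intro S hS
  simp only [Finset.mem_powerset] at hS
  have hiS : i ∉ S := fun h => by
    have := hS h; simp at this
  have hjS : j ∉ S := fun h => by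
    have := hS h; simp at this
  unfold trunc
  rw [Finset.card_insert_of_notMem hiS, Finset.card_insert_of_notMem hjS]
  by_cases hc : k ≤ S.card + 1
  · rw [if_pos hc, if_pos hc]
    exact hsym S (Finset.mem_powerset.mpr hS)
  · rw [if_neg hc, if_neg hc]

noncomputable def UU (n k : ℕ) (i j : Fin n) (v : Finset (Fin n) → ℝ) :
    Finset (Fin n) → ℝ :=
  fun S => if j ∈ S ∧ (i ∉ S ∨ k < S.card)
    then -(v (insert i (S \ {i, j})) - v (insert j (S \ {i, j})))
    else 0

theorem UU_empty (n k : ℕ) (i j : Fin n) (v : Finset (Fin n) → ℝ) :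
    UU n k i j v ∅ = 0 := by
  unfold UU
  rw [if_neg]
  simp

theorem UU_sdiff_insert (n : ℕ) (i j : Fin n) (S : Finset (Fin n)) :
    (insert i S) \ {i, j} = S \ {i, j} :=
  Finset.insert_sdiff_of_mem S (Finset.mem_insert_self i {j})

theorem UU_sdiff_insert' (n : ℕ) (i j : Fin n) (S : Finset (Fin n)) :
    (insert j S) \ {i, j} = S \ {i, j} :=
  Finset.insert_sdiff_of_mem S (Finset.mem_insert_of_mem (Finset.mem_singleton_self j))

theorem UU_null (n k : ℕ) (i j : Fin n) (hij : i ≠ j) (v : Finset (Fin n) → ℝ) :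
    (∀ S ∈ (Finset.univ.erase i).powerset, S.card < k → UU n k i j v (insert i S) = 0) ∧
    (∀ S ∈ (Finset.univ.erase i).powerset, k ≤ S.card →
      UU n k i j v (insert i S) = UU n k i j v S) := by
  constructor
  · intro S hS hc
    simp only [Finset.mem_powerset, Finset.subset_erase] at hS
    unfold UU
    rw [if_neg]
    rintro ⟨hj, hcon⟩
    rcases hcon with h | h
    · exact h (Finset.mem_insert_self i S)
    · rw [Finset.card_insert_of_notMem hS.2] at h
      omega
  · intro S hS hc
    simp only [Finset.mem_powerset, Finset.subset_erase] at hS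
    unfold UU
    by_cases hj : j ∈ S
    · rw [if_pos, if_pos]
      · rw [UU_sdiff_insert]
      · exact ⟨hj, Or.inl hS.2⟩
      · refine ⟨Finset.mem_insert_of_mem hj, Or.inr ?_⟩
        rw [Finset.card_insert_of_notMem hS.2]
        omega
    · rw [if_neg, if_neg]
      · rintro ⟨h, -⟩; exact hj h
      · rintro ⟨h, -⟩
        rcases Finset.mem_insert.mp h with h' | h'
        · exact hij h'.symm
        · exact hj h'

theorem UU_fairdiff (n k : ℕ) (i j : Fin n) (hij : i ≠ j) (v : Finset (Fin n) → ℝ) :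
    ∀ S ∈ (Finset.univ \ {i, j} : Finset (Fin n)).powerset,
      (v (insert i S) - UU n k i j v (insert i S))
        = (v (insert j S) - UU n k i j v (insert j S)) := by
  intro S hS
  simp only [Finset.mem_powerset] at hS
  have hiS : i ∉ S := fun h => by have := hS h; simp at this
  have hjS : j ∉ S := fun h => by have := hS h; simp at this
  have hUi : UU n k i j v (insert i S) = 0 := by
    unfold UU
    rw [if_neg]
    rintro ⟨h, -⟩
    rcases Finset.mem_insert.mp h with h' | h'
    · exact hij h'.symm
    · exact hjS h'
  have hsd : S \ ({i, j} : Finset (Fin n)) = S := by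
    ext x
    simp only [Finset.mem_sdiff, Finset.mem_insert, Finset.mem_singleton]
    constructor
    · exact fun h => h.1
    · intro hx
      refine ⟨hx, ?_⟩
      push_neg
      exact ⟨fun h => hiS (h ▸ hx), fun h => hjS (h ▸ hx)⟩
  have hUj : UU n k i j v (insert j S) =
      -(v (insert i S) - v (insert j S)) := by
    unfold UU
    rw [if_pos]
    · rw [UU_sdiff_insert', hsd]
    · refine ⟨Finset.mem_insert_self j S, Or.inl ?_⟩
      intro h
      rcases Finset.mem_insert.mp h with h' | h'
      · exact hij h'
      · exact hiS h'
  rw [hUi, hUj]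
  ring

theorem UU_preserve (n k : ℕ) (i j l : Fin n) (hij : i ≠ j) (hli : l ≠ i) (hlj : l ≠ j)
    (v : Finset (Fin n) → ℝ)
    (h1 : ∀ S ∈ (Finset.univ.erase l).powerset, S.card < k → v (insert l S) = 0)
    (h2 : ∀ S ∈ (Finset.univ.erase l).powerset, k ≤ S.card → v (insert l S) = v S) :
    (∀ S ∈ (Finset.univ.erase l).powerset, S.card < k → UU n k i j v (insert l S) = 0) ∧
    (∀ S ∈ (Finset.univ.erase l).powerset, k ≤ S.card →
      UU n k i j v (insert l S) = UU n k i j v S) := by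
  have hmem : ∀ T : Finset (Fin n), l ∉ T → T ∈ (Finset.univ.erase l).powerset := by
    intro T hT
    simp only [Finset.mem_powerset, Finset.subset_erase]
    exact ⟨Finset.subset_univ _, hT⟩
  have hlij : l ∉ ({i, j} : Finset (Fin n)) := by
    simp only [Finset.mem_insert, Finset.mem_singleton]
    push_neg
    exact ⟨hli, hlj⟩
  constructor
  · -- small coalitions
    intro S hS hc
    simp only [Finset.mem_powerset, Finset.subset_erase] at hS
    obtain ⟨-, hlS⟩ := hS
    by_cases hj : j ∈ S
    · set A := S \ ({i, j} : Finset (Fin n)) with hA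
      have hsd : (insert l S) \ ({i, j} : Finset (Fin n)) = insert l A :=
        Finset.insert_sdiff_of_notMem S hlij
      have hAsub : A ⊆ S := Finset.sdiff_subset
      have hlA : l ∉ A := fun h => hlS (hAsub h)
      have hiA : i ∉ A := by simp [hA, Finset.mem_sdiff]
      have hjA : j ∉ A := by simp [hA, Finset.mem_sdiff]
      have hAle : A.card + 1 ≤ S.card := by
        have hsub : A ⊆ S.erase j := by
          intro x hx
          simp only [hA, Finset.mem_sdiff, Finset.mem_insert, Finset.mem_singleton] at hx
          push_neg at hx
          exact Finset.mem_erase.mpr ⟨hx.2.2, hx.1⟩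
        have := Finset.card_le_card hsub
        rw [Finset.card_erase_of_mem hj] at this
        have hpos : 0 < S.card := Finset.card_pos.mpr ⟨j, hj⟩
        omega
      unfold UU
      split_ifs with h
      · rw [hsd]
        have hz1 : v (insert i (insert l A)) = 0 := by
          rw [Finset.insert_comm]
          refine h1 (insert i A) (hmem _ ?_) ?_
          · simp only [Finset.mem_insert]
            push_neg
            exact ⟨hli, hlA⟩
          · have := Finset.card_insert_le i A
            omega
        have hz2 : v (insert j (insert l A)) = 0 := by
          rw [Finset.insert_comm]
          refine h1 (insert j A) (hmem _ ?_) ?_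
          · simp only [Finset.mem_insert]
            push_neg
            exact ⟨hlj, hlA⟩
          · have := Finset.card_insert_le j A
            omega
        rw [hz1, hz2]
        ring
      · rfl
    · unfold UU
      rw [if_neg]
      rintro ⟨h, -⟩
      rcases Finset.mem_insert.mp h with h' | h'
      · exact hlj h'.symm
      · exact hj h'
  · -- large coalitions
    intro S hS hc
    simp only [Finset.mem_powerset, Finset.subset_erase] at hS
    obtain ⟨-, hlS⟩ := hS
    by_cases hj : j ∈ S
    · set A := S \ ({i, j} : Finset (Fin n)) with hA
      have hsd : (insert l S) \ ({i, j} : Finset (Fin n)) = insert l A :=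
        Finset.insert_sdiff_of_notMem S hlij
      have hAsub : A ⊆ S := Finset.sdiff_subset
      have hlA : l ∉ A := fun h => hlS (hAsub h)
      have hiA : i ∉ A := by simp [hA, Finset.mem_sdiff]
      have hjA : j ∉ A := by simp [hA, Finset.mem_sdiff]
      have hcardS : (insert l S).card = S.card + 1 := Finset.card_insert_of_notMem hlS
      have hjins : j ∈ insert l S := Finset.mem_insert_of_mem hj
      have hAcard_mem : i ∈ S → A.card + 2 = S.card := by
        intro hiS
        have hsub : ({i, j} : Finset (Fin n)) ⊆ S := by
          intro x hx
          rcases Finset.mem_insert.mp hx with h' | h'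
          · exact h' ▸ hiS
          · exact (Finset.mem_singleton.mp h') ▸ hj
        have hc2 : ({i, j} : Finset (Fin n)).card = 2 := by
          rw [Finset.card_insert_of_notMem (by simp [hij]), Finset.card_singleton]
        have := Finset.card_sdiff_of_subset hsub
        have hge := Finset.card_le_card hsub
        rw [hc2] at this hge
        rw [hA, this]
        omega
      have hAcard_nmem : i ∉ S → A.card + 1 = S.card := by
        intro hiS
        have heq : A = S.erase j := by
          ext x
          simp only [hA, Finset.mem_sdiff, Finset.mem_insert, Finset.mem_singleton,
            Finset.mem_erase]
          constructor
          · rintro ⟨hx, hne⟩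
            push_neg at hne
            exact ⟨hne.2, hx⟩
          · rintro ⟨hne, hx⟩
            refine ⟨hx, ?_⟩
            push_neg
            exact ⟨fun h => hiS (h ▸ hx), hne⟩
        rw [heq, Finset.card_erase_of_mem hj]
        have hpos : 0 < S.card := Finset.card_pos.mpr ⟨j, hj⟩
        omega
      unfold UU
      rw [if_pos ⟨hjins, Or.inr (by omega)⟩, hsd]
      by_cases hcon : i ∉ S ∨ k < S.card
      · rw [if_pos ⟨hj, hcon⟩]
        have hki : k ≤ (insert i A).card := by
          rw [Finset.card_insert_of_notMem hiA]
          rcases hcon with h' | h'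
          · have := hAcard_nmem h'
            omega
          · by_cases hiS : i ∈ S
            · have := hAcard_mem hiS
              omega
            · have := hAcard_nmem hiS
              omega
        have hkj : k ≤ (insert j A).card := by
          rw [Finset.card_insert_of_notMem hjA]
          rw [Finset.card_insert_of_notMem hiA] at hki
          omega
        have hz1 : v (insert i (insert l A)) = v (insert i A) := by
          rw [Finset.insert_comm]
          refine h2 (insert i A) (hmem _ ?_) hki
          simp only [Finset.mem_insert]
          push_neg
          exact ⟨hli, hlA⟩
        have hz2 : v (insert j (insert l A)) = v (insert j A) := by
          rw [Finset.insert_comm]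
          refine h2 (insert j A) (hmem _ ?_) hkj
          simp only [Finset.mem_insert]
          push_neg
          exact ⟨hlj, hlA⟩
        rw [hz1, hz2]
      · rw [if_neg (by rintro ⟨-, h⟩; exact hcon h)]
        push_neg at hcon
        obtain ⟨hiS, hklt⟩ := hcon
        have hSk : S.card = k := by omega
        have hAc := hAcard_mem hiS
        have hz1 : v (insert i (insert l A)) = 0 := by
          rw [Finset.insert_comm]
          refine h1 (insert i A) (hmem _ ?_) ?_
          · simp only [Finset.mem_insert]
            push_neg
            exact ⟨hli, hlA⟩
          · rw [Finset.card_insert_of_notMem hiA]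
            omega
        have hz2 : v (insert j (insert l A)) = 0 := by
          rw [Finset.insert_comm]
          refine h1 (insert j A) (hmem _ ?_) ?_
          · simp only [Finset.mem_insert]
            push_neg
            exact ⟨hlj, hlA⟩
          · rw [Finset.card_insert_of_notMem hjA]
            omega
        rw [hz1, hz2]
        ring
    · unfold UU
      rw [if_neg, if_neg]
      · rintro ⟨h, -⟩; exact hj h
      · rintro ⟨h, -⟩
        rcases Finset.mem_insert.mp h with h' | h'
        · exact hlj h'.symm
        · exact hj h'

theorem main_induction (n k : ℕ) (hn : 1 ≤ n) (hk : 1 ≤ k) (hkn : k ≤ n)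
    (Φ : (Finset (Fin n) → ℝ) → Fin n → ℝ)
    (hEff : ∀ v : Finset (Fin n) → ℝ, v ∅ = 0 → ∑ i, Φ v i = v Finset.univ)
    (hNull : ∀ v : Finset (Fin n) → ℝ, v ∅ = 0 → ∀ i : Fin n,
        (∀ S ∈ (Finset.univ.erase i).powerset, S.card < k → v (insert i S) = 0) →
        (∀ S ∈ (Finset.univ.erase i).powerset, k ≤ S.card → v (insert i S) = v S) →
        Φ v i = 0)
    (hFair : ∀ v w : Finset (Fin n) → ℝ, v ∅ = 0 → w ∅ = 0 → ∀ i j : Fin n,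
        (∀ S ∈ (Finset.univ \ {i, j} : Finset (Fin n)).powerset,
          w (insert i S) = w (insert j S)) →
        Φ (v + w) i - Φ v i = Φ (v + w) j - Φ v j) :
    ∀ m : ℕ, ∀ A : Finset (Fin n), n ≤ A.card + m →
      ∀ u : Finset (Fin n) → ℝ, u ∅ = 0 →
      (∀ a ∈ A,
        (∀ S ∈ (Finset.univ.erase a).powerset, S.card < k → u (insert a S) = 0) ∧
        (∀ S ∈ (Finset.univ.erase a).powerset, k ≤ S.card → u (insert a S) = u S)) →
      ∀ i : Fin n, Φ u i = kSED n k u i := by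
  intro m
  induction m with
  | zero =>
    intro A hcard u h0 hA i
    have hle : A.card ≤ n := by
      have := Finset.card_le_univ A
      rwa [Fintype.card_fin] at this
    have hAuniv : A = Finset.univ := Finset.eq_univ_of_card A (by rw [Fintype.card_fin]; omega)
    have hi : i ∈ A := hAuniv ▸ Finset.mem_univ i
    rw [hNull u h0 i (hA i hi).1 (hA i hi).2, kSED_null n k hk u i (hA i hi).1 (hA i hi).2]
  | succ m ih =>
    intro A hcard u h0 hA i
    by_cases hiA : i ∈ A
    · rw [hNull u h0 i (hA i hiA).1 (hA i hiA).2,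
        kSED_null n k hk u i (hA i hiA).1 (hA i hiA).2]
    · have key : ∀ l j : Fin n, l ∉ A → j ∉ A → l ≠ j →
          Φ u l - kSED n k u l = Φ u j - kSED n k u j := by
        intro l j hlA hjA hlj
        set u' := UU n k l j u with hu'
        have hu'0 : u' ∅ = 0 := UU_empty n k l j u
        have hu'null := UU_null n k l j hlj u
        have hA' : ∀ a ∈ insert l A,
            (∀ S ∈ (Finset.univ.erase a).powerset, S.card < k → u' (insert a S) = 0) ∧
            (∀ S ∈ (Finset.univ.erase a).powerset, k ≤ S.card → u' (insert a S) = u' S) := by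
          intro a ha
          rcases Finset.mem_insert.mp ha with rfl | haA
          · exact hu'null
          · exact UU_preserve n k l j a hlj
              (fun h => hlA (h ▸ haA)) (fun h => hjA (h ▸ haA)) u (hA a haA).1 (hA a haA).2
        have hcard' : n ≤ (insert l A).card + m := by
          rw [Finset.card_insert_of_notMem hlA]
          omega
        have hIH : ∀ x, Φ u' x = kSED n k u' x := ih (insert l A) hcard' u' hu'0 hA'
        have hw := UU_fairdiff n k l j hlj u
        have hw' : ∀ S ∈ (Finset.univ \ {l, j} : Finset (Fin n)).powerset,
            (fun S => u S - u' S) (insert l S) = (fun S => u S - u' S) (insert j S) := by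
          intro S hS
          exact hw S hS
        have hw0 : (fun S => u S - u' S) ∅ = 0 := by
          simp only [h0, hu'0, sub_zero]
        have hgame : (u' + fun S => u S - u' S) = u := by
          funext S
          simp only [Pi.add_apply]
          ring
        have hfairΦ := hFair u' (fun S => u S - u' S) hu'0 hw0 l j hw'
        rw [hgame] at hfairΦ
        have hfairK := kSED_fair n k hk u' (fun S => u S - u' S) l j hw'
        rw [hgame] at hfairK
        rw [hIH l, hIH j] at hfairΦ
        linarith [hfairΦ, hfairK]
      have hsum : ∑ x, (Φ u x - kSED n k u x) = 0 := by
        rw [Finset.sum_sub_distrib, hEff u h0, kSED_eff n k hn hk hkn u]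
        ring
      have hzero : ∀ x ∈ A, Φ u x - kSED n k u x = 0 := by
        intro x hx
        rw [hNull u h0 x (hA x hx).1 (hA x hx).2,
          kSED_null n k hk u x (hA x hx).1 (hA x hx).2]
        ring
      have heq : ∀ x ∈ Aᶜ, Φ u x - kSED n k u x = Φ u i - kSED n k u i := by
        intro x hx
        rw [Finset.mem_compl] at hx
        by_cases hxi : x = i
        · rw [hxi]
        · exact key x i hx hiA hxi
      have hsplit : ∑ x ∈ A, (Φ u x - kSED n k u x) + ∑ x ∈ Aᶜ, (Φ u x - kSED n k u x)
          = ∑ x, (Φ u x - kSED n k u x) := Finset.sum_add_sum_compl A _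
      rw [Finset.sum_eq_zero hzero, zero_add] at hsplit
      rw [Finset.sum_congr rfl heq, Finset.sum_const, nsmul_eq_mul] at hsplit
      rw [← hsplit] at hsum
      have hpos : 0 < (Aᶜ : Finset (Fin n)).card :=
        Finset.card_pos.mpr ⟨i, Finset.mem_compl.mpr hiA⟩
      have hne : (((Aᶜ : Finset (Fin n)).card : ℝ)) ≠ 0 :=
        Nat.cast_ne_zero.mpr (Nat.pos_iff_ne_zero.mp hpos)
      rcases mul_eq_zero.mp hsum with h | h
      · exact absurd h hne
      · linarith [h]


/-- a value satisfies efficiency, the `k`-nullifying null player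
property and fairness iff it is the `k`-SED value. -/
theorem kSED_characterization_fairness (n k : ℕ) (hn : 1 ≤ n) (hk : 1 ≤ k) (hkn : k ≤ n)
    (Φ : (Finset (Fin n) → ℝ) → Fin n → ℝ) :
    ((∀ v : Finset (Fin n) → ℝ, v ∅ = 0 → ∑ i, Φ v i = v Finset.univ) ∧
     (∀ v : Finset (Fin n) → ℝ, v ∅ = 0 → ∀ i : Fin n,
        (∀ S ∈ (Finset.univ.erase i).powerset, S.card < k → v (insert i S) = 0) →
        (∀ S ∈ (Finset.univ.erase i).powerset, k ≤ S.card → v (insert i S) = v S) →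
        Φ v i = 0) ∧
     (∀ v w : Finset (Fin n) → ℝ, v ∅ = 0 → w ∅ = 0 → ∀ i j : Fin n,
        (∀ S ∈ (Finset.univ \ {i, j} : Finset (Fin n)).powerset,
          w (insert i S) = w (insert j S)) →
        Φ (v + w) i - Φ v i = Φ (v + w) j - Φ v j))
    ↔ (∀ v : Finset (Fin n) → ℝ, v ∅ = 0 → ∀ i : Fin n, Φ v i = kSED n k v i) := by
  constructor
  · rintro ⟨hEff, hNull, hFair⟩ v h0 i
    exact main_induction n k hn hk hkn Φ hEff hNull hFair n ∅ (by simp) v h0 (by simp) i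
  · intro hΦ
    refine ⟨?_, ?_, ?_⟩
    · intro v h0
      rw [Finset.sum_congr rfl (fun i _ => hΦ v h0 i)]
      exact kSED_eff n k hn hk hkn v
    · intro v h0 i hn1 hn2
      rw [hΦ v h0 i]
      exact kSED_null n k hk v i hn1 hn2
    · intro v w h0v h0w i j hsym
      have hvw : (v + w) ∅ = 0 := by simp [Pi.add_apply, h0v, h0w]
      rw [hΦ v h0v i, hΦ v h0v j, hΦ (v + w) hvw i, hΦ (v + w) hvw j]
      exact kSED_fair n k hk v w i j hsym
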